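/- The group presented by ⟨x, y | x⁻¹ y² x = y³, x² = y⁻¹ x y⁻¹⟩ is the trivial group. -/

import Mathlib

/-- The generator `x` of the free group on two generators. -/
def x : FreeGroup Bool := FreeGroup.of true

/-- The generator `y` of the free group on two generators. -/
def y : FreeGroup Bool := FreeGroup.of false

/-- The group ⟨x, y | x⁻¹ y² x = y³, x² = y⁻¹ x y⁻¹⟩ is trivial. -/
theorem presentedGroup_trivial_7 :
    Subsingleton (PresentedGroup ({x⁻¹ * y ^ 2 * x * (y ^ 3)⁻¹, x ^ 2 * (y⁻¹ * x * y⁻¹)⁻¹} :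
      Set (FreeGroup Bool))) := by
  set rels : Set (FreeGroup Bool) :=
    {x⁻¹ * y ^ 2 * x * (y ^ 3)⁻¹, x ^ 2 * (y⁻¹ * x * y⁻¹)⁻¹} with hrels
  let π : FreeGroup Bool →* PresentedGroup rels := QuotientGroup.mk' _
  set X : PresentedGroup rels := π x with hXdef
  set Y : PresentedGroup rels := π y with hYdef
  have hrel : ∀ r ∈ rels, π r = 1 := fun r hr =>
    (QuotientGroup.eq_one_iff r).mpr (Subgroup.subset_normalClosure hr)
  have h1' : X⁻¹ * Y ^ 2 * X * (Y ^ 3)⁻¹ = 1 := by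
    have := hrel _ (Set.mem_insert _ _)
    simpa [map_mul, map_inv, map_pow] using this
  have h2' : X ^ 2 * (Y⁻¹ * X * Y⁻¹)⁻¹ = 1 := by
    have := hrel _ (Set.mem_insert_of_mem _ rfl)
    simpa [map_mul, map_inv, map_pow] using this
  have h1p : X⁻¹ * Y ^ 2 * X = Y ^ 3 := mul_inv_eq_one.mp h1'
  have h2p : X ^ 2 = Y⁻¹ * X * Y⁻¹ := mul_inv_eq_one.mp h2'
  have h1 : X⁻¹ * (Y * Y) * X = Y * Y * Y := by
    simpa [pow_succ, pow_zero, one_mul, mul_assoc] using h1p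
  have h2 : X * X = Y⁻¹ * X * Y⁻¹ := by
    simpa [pow_succ, pow_zero, one_mul] using h2p
  -- y⁻¹ x = x² y
  have hBX : Y⁻¹ * X = X * X * Y := by rw [h2]; group
  -- x⁻¹ y = y⁻¹ x⁻²
  have hXB : X⁻¹ * Y = Y⁻¹ * X⁻¹ * X⁻¹ := by
    calc X⁻¹ * Y = (Y⁻¹ * X)⁻¹ := by group
      _ = (X * X * Y)⁻¹ := by rw [hBX]
      _ = Y⁻¹ * X⁻¹ * X⁻¹ := by group
  -- y⁴ = x⁻² y x
  have hC : Y * Y * Y * Y = X⁻¹ * X⁻¹ * Y * X := by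
    calc Y * Y * Y * Y = Y * (Y * Y * Y) := by group
      _ = Y * (X⁻¹ * (Y * Y) * X) := by rw [h1]
      _ = Y * (X⁻¹ * Y) * (Y * X) := by group
      _ = Y * (Y⁻¹ * X⁻¹ * X⁻¹) * (Y * X) := by rw [hXB]
      _ = X⁻¹ * X⁻¹ * Y * X := by group
  -- y x = x² y⁴
  have hC' : Y * X = X * X * (Y * Y * Y * Y) := by
    calc Y * X = X * X * (X⁻¹ * X⁻¹ * Y * X) := by group
      _ = X * X * (Y * Y * Y * Y) := by rw [← hC]
  -- y² = x y² x⁻¹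
  have hD : Y * Y = X * (Y * Y) * X⁻¹ := by
    calc Y * Y = (Y * X) * (X⁻¹ * Y) := by group
      _ = (X * X * (Y * Y * Y * Y)) * (X⁻¹ * Y) := by rw [hC']
      _ = (X * X * (Y * Y * Y * Y)) * (Y⁻¹ * X⁻¹ * X⁻¹) := by rw [hXB]
      _ = X * X * (Y * Y * Y) * (X⁻¹ * X⁻¹) := by group
      _ = X * X * (X⁻¹ * (Y * Y) * X) * (X⁻¹ * X⁻¹) := by rw [h1]
      _ = X * (Y * Y) * X⁻¹ := by group
  -- y³ = y²
  have hE : Y * Y * Y = Y * Y := by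
    calc Y * Y * Y = X⁻¹ * (Y * Y) * X := h1.symm
      _ = X⁻¹ * (X * (Y * Y) * X⁻¹) * X := by rw [← hD]
      _ = Y * Y := by group
  have hY : Y = 1 := by
    have h : Y * Y * Y = Y * Y * 1 := by rw [mul_one]; exact hE
    exact mul_left_cancel h
  have hX : X = 1 := by
    rw [hY] at h2
    have h : X * X = X * 1 := by simpa using h2
    exact mul_left_cancel h
  have hone : ∀ g : PresentedGroup rels, g = 1 := by
    have hπ : (π : FreeGroup Bool →* PresentedGroup rels) = 1 := by
      apply FreeGroup.ext_hom
      intro b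
      cases b
      · exact hY
      · exact hX
    intro g
    obtain ⟨w, rfl⟩ := QuotientGroup.mk'_surjective _ g
    show π w = 1
    rw [hπ]; rfl
  exact ⟨fun a b => by rw [hone a, hone b]⟩
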